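/- Let b ≥ a ≥ 0 with a possibly zero, c > 0, K ≥ 0, and k a natural number. Then there exists a polynomial P with nonnegative coefficients (depending on k) such that ∫_a^b (1/max(c,x)) · (ln₊(K/x))^k dx ≤ P(ln₊(max(K,b)/max(c,a))). -/

import Mathlib

open MeasureTheory Real Set

/-- The positive part of the logarithm: `ln₊ x = max (ln x) 0`. -/
noncomputable def lnp (x : ℝ) : ℝ := max (Real.log x) 0

lemma lnp_nonneg (x : ℝ) : 0 ≤ lnp x := le_max_right _ _

lemma lnp_mono {x y : ℝ} (hx : 0 ≤ x) (hxy : x ≤ y) : lnp x ≤ lnp y := by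
  rcases eq_or_lt_of_le hx with h | h
  · simp [lnp, ← h]
  · exact max_le_max (Real.log_le_log h hxy) le_rfl

lemma lnp_mul_le {x y : ℝ} (hx : 0 ≤ x) (hy : 0 ≤ y) : lnp (x * y) ≤ lnp x + lnp y := by
  rcases eq_or_lt_of_le hx with h | h
  · have : lnp (x*y) = 0 := by simp [lnp, ← h]
    rw [this]; exact add_nonneg (lnp_nonneg _) (lnp_nonneg _)
  rcases eq_or_lt_of_le hy with h' | h'
  · have : lnp (x*y) = 0 := by simp [lnp, ← h']
    rw [this]; exact add_nonneg (lnp_nonneg _) (lnp_nonneg _)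
  · unfold lnp
    rw [Real.log_mul h.ne' h'.ne']
    exact max_le (add_le_add (le_max_left _ _) (le_max_left _ _)) (by positivity)

lemma lnp_pow_le (k : ℕ) {u : ℝ} (hu : 1 ≤ u) :
    lnp u ^ k ≤ (2 * k : ℝ) ^ k * u ^ ((1:ℝ)/2) := by
  have hu0 : (0:ℝ) < u := lt_of_lt_of_le one_pos hu
  rcases Nat.eq_zero_or_pos k with hk | hk
  · subst hk
    simpa using Real.one_le_rpow hu (by norm_num)
  · have hkR : (0:ℝ) < (k:ℝ) := by exact_mod_cast hk
    have hlog : lnp u = Real.log u := max_eq_left (Real.log_nonneg hu)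
    have hε : (0:ℝ) < 1 / (2 * k) := by positivity
    have h1 : Real.log u ≤ (2 * k : ℝ) * u ^ ((1:ℝ)/(2*k)) := by
      calc Real.log u ≤ u ^ ((1:ℝ)/(2*k)) / ((1:ℝ)/(2*k)) := Real.log_le_rpow_div hu0.le hε
        _ = (2 * k : ℝ) * u ^ ((1:ℝ)/(2*k)) := by field_simp
    calc lnp u ^ k ≤ ((2 * k : ℝ) * u ^ ((1:ℝ)/(2*k))) ^ k := by
          rw [hlog]
          exact pow_le_pow_left₀ (Real.log_nonneg hu) h1 k
      _ = (2 * k : ℝ) ^ k * (u ^ ((1:ℝ)/(2*k))) ^ (k:ℕ) := mul_pow _ _ _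
      _ = (2 * k : ℝ) ^ k * u ^ ((1:ℝ)/2) := by
          rw [← Real.rpow_natCast (u ^ ((1:ℝ)/(2*k))) k, ← Real.rpow_mul hu0.le]
          congr 1
          rw [div_mul_eq_mul_div, one_mul, mul_comm 2 (k:ℝ), ← div_div, div_self hkR.ne']

/-- Lemma (Λ integration, part 3): for `k : ℕ` there is a polynomial `P` with nonnegative
coefficients (depending on `k`) such that for all `b ≥ a ≥ 0`, `c > 0` and `K ≥ 0`,
`∫_a^b (1/max(c,x)) (ln₊(K/x))^k dx ≤ P(ln₊(max(K,b)/max(c,a)))`. -/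
theorem lambda_integration_three (k : ℕ) :
    ∃ P : Polynomial ℝ, (∀ n, 0 ≤ P.coeff n) ∧
      ∀ a b c K : ℝ, 0 ≤ a → a ≤ b → 0 < c → 0 ≤ K →
        (∫ x in a..b, (1 / max c x) * (lnp (K / x)) ^ k)
          ≤ P.eval (lnp (max K b / max c a)) := by
  refine ⟨Polynomial.C ((2:ℝ)^k) * (Polynomial.X^(k+1) + Polynomial.X^k)
      + Polynomial.C ((2:ℝ)^(k+1) * (2 * k : ℝ)^k), ?_, ?_⟩
  · intro n
    simp only [Polynomial.coeff_add, Polynomial.coeff_C_mul, Polynomial.mul_coeff_zero,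
      Polynomial.coeff_X_pow, Polynomial.coeff_C, mul_add]
    split_ifs <;> norm_num <;> positivity
  intro a b c K ha hab hc hK
  set m := max c a with hm_def
  set M := max K b with hM_def
  set L := lnp (M / m) with hL_def
  set t := min b m with ht_def
  have hcm : c ≤ m := le_max_left _ _
  have ham : a ≤ m := le_max_right _ _
  have hm : 0 < m := lt_of_lt_of_le hc hcm
  have hat : a ≤ t := le_min hab ham
  have htb : t ≤ b := min_le_left _ _
  have htm : t ≤ m := min_le_right _ _
  have hL : 0 ≤ L := lnp_nonneg _
  have hmaxc : ∀ x : ℝ, 0 < max c x := fun x => lt_of_lt_of_le hc (le_max_left _ _)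
  set D : ℝ := 2^k * (2 * k : ℝ)^k * c ^ (-(1:ℝ)/2) with hD_def
  have hD : 0 ≤ D := by positivity
  set g1 : ℝ → ℝ := fun x => 2^k * L^k * (max c x)⁻¹ with hg1_def
  set g2 : ℝ → ℝ := (Set.Ioc a t).indicator (fun x => D * x ^ (-(1:ℝ)/2)) with hg2_def
  have hg2nn : ∀ x, 0 ≤ g2 x := by
    intro x
    apply Set.indicator_nonneg
    intro y hy
    have : (0:ℝ) < y := lt_of_le_of_lt ha hy.1
    positivity
  have hcont : Continuous fun x : ℝ => (max c x)⁻¹ :=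
    (continuous_const.max continuous_id).inv₀ fun x => (hmaxc x).ne'
  have hmaxInt : ∀ u v : ℝ, IntegrableOn (fun x => (max c x)⁻¹) (Set.Ioc u v) :=
    fun u v => ((hcont.intervalIntegrable u v).1).mono_set (by
      rcases le_total u v with h | h
      · exact le_refl _
      · simp [Set.Ioc_eq_empty (not_lt.2 h)])
  have hg1i : IntegrableOn g1 (Set.Ioc a b) := (hmaxInt a b).const_mul _
  have hrpowInt : ∀ u v : ℝ, IntegrableOn (fun x => D * x ^ (-(1:ℝ)/2)) (Set.Ioc u v) := by
    intro u v
    rcases le_total u v with h | h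
    · exact ((intervalIntegral.intervalIntegrable_rpow'
        (by norm_num : (-1:ℝ) < -(1:ℝ)/2)).const_mul D).1.mono_set le_rfl
    · simp [Set.Ioc_eq_empty (not_lt.2 h), MeasureTheory.integrableOn_empty]
  have hg2i : IntegrableOn g2 (Set.Ioc a b) :=
    (((hrpowInt a t).integrable_indicator measurableSet_Ioc)).integrableOn
  -- pointwise bound
  have hfg : ∀ x ∈ Set.Ioc a b, (1 / max c x) * (lnp (K / x)) ^ k ≤ g1 x + g2 x := by
    intro x hx
    have hx0 : (0:ℝ) < x := lt_of_le_of_lt ha hx.1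
    rcases Nat.eq_zero_or_pos k with hk | hk
    · subst hk
      have : (1 / max c x) * (lnp (K / x)) ^ 0 = g1 x := by
        simp [hg1_def, one_div]
      rw [this]
      exact le_add_of_nonneg_right (hg2nn x)
    · have key1 : lnp (K / x) ≤ L + lnp (m / x) := by
        have hKx : K / x = (K / m) * (m / x) := by field_simp
        rw [hKx]
        have h1 : lnp (K / m) ≤ L := by
          apply lnp_mono (by positivity)
          gcongr
          exact le_max_left _ _
        calc lnp ((K / m) * (m / x)) ≤ lnp (K / m) + lnp (m / x) :=
              lnp_mul_le (by positivity) (by positivity)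
          _ ≤ L + lnp (m / x) := add_le_add_left h1 _
      have key2 : lnp (K / x) ^ k ≤ 2^k * (L^k + lnp (m / x)^k) := by
        calc lnp (K / x) ^ k ≤ (L + lnp (m / x)) ^ k :=
              pow_le_pow_left₀ (lnp_nonneg _) key1 k
          _ ≤ 2^(k-1) * (L^k + lnp (m / x)^k) := add_pow_le hL (lnp_nonneg _) k
          _ ≤ 2^k * (L^k + lnp (m / x)^k) := by
              apply mul_le_mul_of_nonneg_right
              · exact pow_le_pow_right₀ one_le_two (Nat.sub_le k 1)
              · have := lnp_nonneg (m / x); positivity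
      have hstep : (1 / max c x) * (lnp (K / x)) ^ k
          ≤ g1 x + (1 / max c x) * (2^k * lnp (m / x)^k) := by
        calc (1 / max c x) * (lnp (K / x)) ^ k
            ≤ (1 / max c x) * (2^k * (L^k + lnp (m / x)^k)) := by
              apply mul_le_mul_of_nonneg_left key2
              positivity
          _ = g1 x + (1 / max c x) * (2^k * lnp (m / x)^k) := by
              simp only [hg1_def, one_div]; ring
      refine hstep.trans (add_le_add_right ?_ _)
      -- show (1 / max c x) * (2^k * lnp (m / x)^k) ≤ g2 x
      by_cases hxt : x ≤ t
      · have hca : a < c := by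
          by_contra hcon
          push_neg at hcon
          have : m = a := max_eq_right hcon
          exact absurd (hxt.trans (htm.trans_eq this)) (not_le.2 hx.1)
        have hmc : m = c := max_eq_left hca.le
        have hxc : x ≤ c := le_of_le_of_eq (hxt.trans htm) hmc
        have hmaxeq : max c x = c := max_eq_left hxc
        have hu : 1 ≤ c / x := (one_le_div hx0).mpr hxc
        have hcx : (c/x) ^ ((1:ℝ)/2) = c ^ ((1:ℝ)/2) * x ^ (-(1:ℝ)/2) := by
          rw [Real.div_rpow hc.le hx0.le, neg_div, Real.rpow_neg hx0.le, div_eq_mul_inv]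
        have hcc : c⁻¹ * c ^ ((1:ℝ)/2) = c ^ (-(1:ℝ)/2) := by
          rw [← Real.rpow_neg_one c, ← Real.rpow_add hc]
          norm_num
        have hg2x : g2 x = D * x ^ (-(1:ℝ)/2) :=
          Set.indicator_of_mem (show x ∈ Set.Ioc a t from ⟨hx.1, hxt⟩) _
        rw [hg2x, hmaxeq, hmc]
        calc (1 / c) * (2^k * lnp (c / x)^k)
            ≤ (1 / c) * (2^k * ((2 * k : ℝ)^k * (c/x) ^ ((1:ℝ)/2))) := by
              apply mul_le_mul_of_nonneg_left _ (by positivity)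
              exact mul_le_mul_of_nonneg_left (lnp_pow_le k hu) (by positivity)
          _ = 2^k * (2 * k : ℝ)^k * (c⁻¹ * c ^ ((1:ℝ)/2)) * x ^ (-(1:ℝ)/2) := by
              rw [hcx]; ring
          _ = D * x ^ (-(1:ℝ)/2) := by rw [hcc, hD_def]
      · push_neg at hxt
        have hmx : m < x := by
          rcases le_total b m with h' | h'
          · rw [ht_def, min_eq_left h'] at hxt
            exact absurd hx.2 (not_le.2 hxt)
          · rw [ht_def, min_eq_right h'] at hxt
            exact hxt
        have hlnp0 : lnp (m / x) = 0 := by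
          have h1 : m / x < 1 := (div_lt_one hx0).mpr hmx
          have h2 : Real.log (m / x) < 0 := Real.log_neg (by positivity) h1
          exact max_eq_right h2.le
        rw [hlnp0, zero_pow hk.ne', mul_zero, mul_zero]
        exact hg2nn x
  -- integral of (max c x)⁻¹
  have hI1 : ∫ x in Set.Ioc a b, (max c x)⁻¹ ≤ 1 + L := by
    have hsplit : Set.Ioc a b = Set.Ioc a t ∪ Set.Ioc t b := (Set.Ioc_union_Ioc_eq_Ioc hat htb).symm
    rw [hsplit, setIntegral_union (Set.Ioc_disjoint_Ioc_of_le le_rfl) measurableSet_Ioc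
      (hmaxInt a t) (hmaxInt t b)]
    have hp1 : ∫ x in Set.Ioc a t, (max c x)⁻¹ ≤ 1 := by
      have h1 : ∫ x in Set.Ioc a t, (max c x)⁻¹ ≤ ∫ _x in Set.Ioc a t, c⁻¹ :=
        setIntegral_mono_on (hmaxInt a t) (integrableOn_const measure_Ioc_lt_top.ne)
          measurableSet_Ioc
          (fun x _ => inv_anti₀ hc (le_max_left _ _))
      have h2 : ∫ _x in Set.Ioc a t, c⁻¹ = (t - a) * c⁻¹ := by
        rw [setIntegral_const, measureReal_def, Real.volume_Ioc, smul_eq_mul,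
          ENNReal.toReal_ofReal (sub_nonneg.2 hat)]
      have h3 : t - a ≤ c := by
        have : m ≤ a + c := max_le (by linarith) (by linarith)
        have := htm
        linarith
      have h4 : (t - a) * c⁻¹ ≤ c * c⁻¹ := by
        apply mul_le_mul_of_nonneg_right h3 (by positivity)
      rw [mul_inv_cancel₀ hc.ne'] at h4
      linarith
    have hp2 : ∫ x in Set.Ioc t b, (max c x)⁻¹ ≤ L := by
      rcases le_total b m with hbm | hmb
      · have : t = b := min_eq_left hbm
        rw [this]
        simp [hL]
      · have htm' : t = m := min_eq_right hmb
        rw [htm']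
        have heq : Set.EqOn (fun x : ℝ => (max c x)⁻¹) (fun x : ℝ => x⁻¹) (Set.Ioc m b) :=
          fun x hx => by simp only; rw [max_eq_right (hcm.trans hx.1.le)]
        rw [setIntegral_congr_fun measurableSet_Ioc heq,
          ← intervalIntegral.integral_of_le hmb,
          integral_inv_of_pos hm (hm.trans_le hmb)]
        have hbM : b / m ≤ M / m := by gcongr; exact le_max_right K b
        calc Real.log (b / m) ≤ Real.log (M / m) :=
              Real.log_le_log (div_pos (hm.trans_le hmb) hm) hbM
          _ ≤ L := le_max_left _ _
    linarith
  -- integral of g2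
  have hI2 : ∫ x in Set.Ioc a b, g2 x ≤ 2^(k+1) * (2 * k : ℝ)^k := by
    rw [hg2_def, setIntegral_indicator measurableSet_Ioc]
    have hinter : Set.Ioc a b ∩ Set.Ioc a t = Set.Ioc a t := by
      rw [Set.Ioc_inter_Ioc, max_self, min_eq_right htb]
    rw [hinter]
    rcases le_or_gt t a with hta | hta
    · rw [Set.Ioc_eq_empty (not_lt.2 hta), MeasureTheory.setIntegral_empty]
      positivity
    · have hca : a < c := by
        by_contra hcon
        push_neg at hcon
        have : m = a := max_eq_right hcon
        exact absurd (htm.trans_eq this) (not_le.2 hta)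
      have hmc : m = c := max_eq_left hca.le
      have htc : t ≤ c := htm.trans_eq hmc
      have hsub : Set.Ioc a t ⊆ Set.Ioc 0 c := Set.Ioc_subset_Ioc ha htc
      have hmono : ∫ x in Set.Ioc a t, D * x ^ (-(1:ℝ)/2)
          ≤ ∫ x in Set.Ioc 0 c, D * x ^ (-(1:ℝ)/2) := by
        apply setIntegral_mono_set (hrpowInt 0 c)
        · refine (ae_restrict_iff' measurableSet_Ioc).2 (Filter.Eventually.of_forall ?_)
          intro x hx
          have : (0:ℝ) < x := hx.1
          positivity
        · exact HasSubset.Subset.eventuallyLE hsub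
      have hval : ∫ x in Set.Ioc 0 c, D * x ^ (-(1:ℝ)/2) = D * (2 * c ^ ((1:ℝ)/2)) := by
        rw [MeasureTheory.integral_const_mul, ← intervalIntegral.integral_of_le hc.le,
          integral_rpow (Or.inl (by norm_num : (-1:ℝ) < -(1:ℝ)/2))]
        rw [Real.zero_rpow (by norm_num : (-(1:ℝ)/2 + 1) ≠ 0),
          show (-(1:ℝ)/2 + 1) = 1/2 by norm_num]
        ring
      have hfin : D * (2 * c ^ ((1:ℝ)/2)) = 2^(k+1) * (2 * k : ℝ)^k := by
        have hcc : c ^ (-(1:ℝ)/2) * c ^ ((1:ℝ)/2) = 1 := by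
          rw [← Real.rpow_add hc]; norm_num
        calc D * (2 * c ^ ((1:ℝ)/2))
            = 2^(k+1) * (2 * k : ℝ)^k * (c ^ (-(1:ℝ)/2) * c ^ ((1:ℝ)/2)) := by
              rw [hD_def]; ring
          _ = 2^(k+1) * (2 * k : ℝ)^k := by rw [hcc, mul_one]
      calc ∫ x in Set.Ioc a t, D * x ^ (-(1:ℝ)/2)
          ≤ ∫ x in Set.Ioc 0 c, D * x ^ (-(1:ℝ)/2) := hmono
        _ = 2^(k+1) * (2 * k : ℝ)^k := by rw [hval, hfin]
  -- final chain
  have hfnn : ∀ x : ℝ, 0 ≤ (1 / max c x) * (lnp (K / x)) ^ k := fun x =>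
    mul_nonneg (by rw [one_div]; exact inv_nonneg.2 (hmaxc x).le)
      (pow_nonneg (lnp_nonneg _) k)
  calc (∫ x in a..b, (1 / max c x) * (lnp (K / x)) ^ k)
      = ∫ x in Set.Ioc a b, (1 / max c x) * (lnp (K / x)) ^ k :=
        intervalIntegral.integral_of_le hab
    _ ≤ ∫ x in Set.Ioc a b, (g1 x + g2 x) := by
        apply integral_mono_of_nonneg (Filter.Eventually.of_forall fun x => hfnn x) (hg1i.add hg2i)
        exact (ae_restrict_iff' measurableSet_Ioc).2 (Filter.Eventually.of_forall hfg)
    _ = (∫ x in Set.Ioc a b, g1 x) + ∫ x in Set.Ioc a b, g2 x := integral_add hg1i hg2i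
    _ = 2^k * L^k * (∫ x in Set.Ioc a b, (max c x)⁻¹) + ∫ x in Set.Ioc a b, g2 x := by
        rw [hg1_def, MeasureTheory.integral_const_mul]
    _ ≤ 2^k * L^k * (1 + L) + 2^(k+1) * (2 * k : ℝ)^k := by
        apply add_le_add _ hI2
        exact mul_le_mul_of_nonneg_left hI1 (by positivity)
    _ = Polynomial.eval L (Polynomial.C ((2:ℝ)^k) * (Polynomial.X^(k+1) + Polynomial.X^k)
        + Polynomial.C ((2:ℝ)^(k+1) * (2 * k : ℝ)^k)) := by
        simp [Polynomial.eval_add, Polynomial.eval_mul, Polynomial.eval_pow]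
        ring
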